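/- Let X and Y be independent random variables, both generalized Weibull-tail on ℝ₊ (nonnegative), with parameters 1/θ_x and 1/θ_y. Then P(XY ≥ z) ≥ e^{−z^{1/(θ_x+θ_y)} l(z)} for z large, where l(z) = l₁ˣ(z^{θ_x/(θ_x+θ_y)}) + l₁ʸ(z^{θ_y/(θ_x+θ_y)}) is slowly-varying, with l₁ˣ, l₁ʸ the slowly-varying functions in the lower tail bounds of X and Y. -/

import Mathlib

open MeasureTheory Filter Real Finset

noncomputable section

/-- A positive function `l` on `(0,∞)` is slowly varying if `l(tx)/l(x) → 1` as `x → ∞`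
for every `t > 0`. -/
def SlowlyVarying (l : ℝ → ℝ) : Prop :=
  (∀ x : ℝ, 0 < x → 0 < l x) ∧
    ∀ t : ℝ, 0 < t → Tendsto (fun x : ℝ => l (t * x) / l x) atTop (nhds 1)

/-- A positive function `r` is regularly varying with index `ρ` if `r(tx)/r(x) → t^ρ`. -/
def RegularlyVarying (r : ℝ → ℝ) (ρ : ℝ) : Prop :=
  (∀ᶠ x in atTop, 0 < r x) ∧
    ∀ t : ℝ, 0 < t → Tendsto (fun x : ℝ => r (t * x) / r x) atTop (nhds (t ^ ρ))

/-- Survival function `P(X ≥ x)`. -/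
def survival {Ω : Type*} [MeasurableSpace Ω] (μ : Measure Ω) (X : Ω → ℝ) (x : ℝ) : ℝ :=
  (μ {ω | x ≤ X ω}).toReal

/-- `X` is generalized Weibull-tail on `ℝ₊` with tail parameter `β`:
its survival function is sandwiched between Weibull-tail functions with parameter `β`
for `x` large enough. -/
def GWTpos {Ω : Type*} [MeasurableSpace Ω] (μ : Measure Ω) (X : Ω → ℝ) (β : ℝ) : Prop :=
  ∃ l₁ l₂ : ℝ → ℝ, SlowlyVarying l₁ ∧ SlowlyVarying l₂ ∧
    ∀ᶠ x in atTop, Real.exp (-(x ^ β * l₁ x)) ≤ survival μ X x ∧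
      survival μ X x ≤ Real.exp (-(x ^ β * l₂ x))

/-- `X` is generalized Weibull-tail on `ℝ` with tail parameter `β`: both its right tail
`P(X ≥ x)` and its left tail `P(X ≤ -x) = P(-X ≥ x)` are sandwiched between
Weibull-tail functions with parameter `β`. -/
def GWTreal {Ω : Type*} [MeasurableSpace Ω] (μ : Measure Ω) (X : Ω → ℝ) (β : ℝ) : Prop :=
  GWTpos μ X β ∧ GWTpos μ (fun ω => -X ω) β

/-- `X` is Weibull-tail on `ℝ₊` with tail parameter `β`: `P(X ≥ x) = exp (-x^β l(x))`
for `x > 0`, with `l` slowly varying. -/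
def WTpos {Ω : Type*} [MeasurableSpace Ω] (μ : Measure Ω) (X : Ω → ℝ) (β : ℝ) : Prop :=
  ∃ l : ℝ → ℝ, SlowlyVarying l ∧ ∀ x : ℝ, 0 < x →
    survival μ X x = Real.exp (-(x ^ β * l x))

/-- `X` is Weibull-tail on `ℝ` with tail parameter `β`: both tails are Weibull-tail. -/
def WTreal {Ω : Type*} [MeasurableSpace Ω] (μ : Measure Ω) (X : Ω → ℝ) (β : ℝ) : Prop :=
  WTpos μ X β ∧ WTpos μ (fun ω => -X ω) β

/-- `X` is symmetric: `X` and `-X` have the same distribution. -/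
def SymmetricRV {Ω : Type*} [MeasurableSpace Ω] (μ : Measure Ω) (X : Ω → ℝ) : Prop :=
  Measure.map X μ = Measure.map (fun ω => -X ω) μ

lemma mediant_le' {a b c d : ℝ} (hc : 0 < c) (hd : 0 < d) :
    (a + b) / (c + d) ≤ max (a / c) (b / d) := by
  rw [div_le_iff₀ (by positivity)]
  have h1 : a ≤ max (a / c) (b / d) * c := (div_le_iff₀ hc).mp (le_max_left _ _)
  have h2 : b ≤ max (a / c) (b / d) * d := (div_le_iff₀ hd).mp (le_max_right _ _)
  linarith [h1, h2]

lemma le_mediant' {a b c d : ℝ} (hc : 0 < c) (hd : 0 < d) :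
    min (a / c) (b / d) ≤ (a + b) / (c + d) := by
  rw [le_div_iff₀ (by positivity)]
  have h1 : min (a / c) (b / d) * c ≤ a := (le_div_iff₀ hc).mp (min_le_left _ _)
  have h2 : min (a / c) (b / d) * d ≤ b := (le_div_iff₀ hd).mp (min_le_right _ _)
  linarith [h1, h2]

lemma sv_add {f g : ℝ → ℝ} (hf : SlowlyVarying f) (hg : SlowlyVarying g) :
    SlowlyVarying (fun x => f x + g x) := by
  constructor
  · intro x hx; have := hf.1 x hx; have := hg.1 x hx; positivity
  · intro t ht
    have hmin : Tendsto (fun x => min (f (t*x) / f x) (g (t*x) / g x)) atTop (nhds 1) := by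
      simpa using (hf.2 t ht).min (hg.2 t ht)
    have hmax : Tendsto (fun x => max (f (t*x) / f x) (g (t*x) / g x)) atTop (nhds 1) := by
      simpa using (hf.2 t ht).max (hg.2 t ht)
    refine tendsto_of_tendsto_of_tendsto_of_le_of_le' hmin hmax ?_ ?_
    · filter_upwards [eventually_gt_atTop 0] with x hx
      exact le_mediant' (hf.1 x hx) (hg.1 x hx)
    · filter_upwards [eventually_gt_atTop 0] with x hx
      exact mediant_le' (hf.1 x hx) (hg.1 x hx)

lemma sv_comp_rpow {l : ℝ → ℝ} (hl : SlowlyVarying l) {a : ℝ} (ha : 0 < a) :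
    SlowlyVarying (fun z => l (z ^ a)) := by
  constructor
  · intro x hx; exact hl.1 _ (Real.rpow_pos_of_pos hx a)
  · intro t ht
    have h := (hl.2 (t ^ a) (Real.rpow_pos_of_pos ht a)).comp (tendsto_rpow_atTop ha)
    refine h.congr' ?_
    filter_upwards [eventually_gt_atTop (0:ℝ)] with z hz
    simp only [Function.comp]
    rw [Real.mul_rpow ht.le hz.le]

/-- Lower bound for the tail of a product of independent nonnegative generalized
Weibull-tail variables: `P(XY ≥ z) ≥ e^{-z^{1/(θx+θy)} l(z)}` for `z` large, with
`l(z) = l₁ˣ(z^{θx/(θx+θy)}) + l₁ʸ(z^{θy/(θx+θy)})` slowly varying. -/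
theorem product_tail_lower_bound {Ω : Type*} [MeasurableSpace Ω]
    (μ : Measure Ω) [IsProbabilityMeasure μ] (X Y : Ω → ℝ)
    (hmX : Measurable X) (hmY : Measurable Y)
    (hXnn : ∀ ω, 0 ≤ X ω) (hYnn : ∀ ω, 0 ≤ Y ω)
    (θx θy : ℝ) (hθx : 0 < θx) (hθy : 0 < θy)
    (hindep : ProbabilityTheory.IndepFun X Y μ)
    (l1x l2x l1y l2y : ℝ → ℝ)
    (hsv1x : SlowlyVarying l1x) (hsv2x : SlowlyVarying l2x)
    (hsv1y : SlowlyVarying l1y) (hsv2y : SlowlyVarying l2y)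
    (hX : ∀ᶠ x in atTop,
      Real.exp (-(x ^ (1 / θx) * l1x x)) ≤ survival μ X x ∧
        survival μ X x ≤ Real.exp (-(x ^ (1 / θx) * l2x x)))
    (hY : ∀ᶠ x in atTop,
      Real.exp (-(x ^ (1 / θy) * l1y x)) ≤ survival μ Y x ∧
        survival μ Y x ≤ Real.exp (-(x ^ (1 / θy) * l2y x))) :
    SlowlyVarying (fun z : ℝ =>
        l1x (z ^ (θx / (θx + θy))) + l1y (z ^ (θy / (θx + θy)))) ∧
      ∀ᶠ z in atTop,
        Real.exp (-(z ^ (1 / (θx + θy)) *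
            (l1x (z ^ (θx / (θx + θy))) + l1y (z ^ (θy / (θx + θy)))))) ≤
          survival μ (fun ω => X ω * Y ω) z := by
  have hθ : 0 < θx + θy := by linarith
  set α := θx / (θx + θy) with hα
  set β := θy / (θx + θy) with hβ
  have hαpos : 0 < α := by positivity
  have hβpos : 0 < β := by positivity
  have hαβ : α + β = 1 := by rw [hα, hβ, ← add_div, div_self hθ.ne']
  constructor
  · exact sv_add (sv_comp_rpow hsv1x hαpos) (sv_comp_rpow hsv1y hβpos)
  · have hXz := (tendsto_rpow_atTop hαpos).eventually hX
    have hYz := (tendsto_rpow_atTop hβpos).eventually hY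
    filter_upwards [hXz, hYz, eventually_gt_atTop (0:ℝ)] with z hXz hYz hz
    have hxy : z ^ α * z ^ β = z := by
      rw [← Real.rpow_add hz, hαβ, Real.rpow_one]
    -- survival of product bounded below by product of survivals
    have hsub : {ω | z ^ α ≤ X ω} ∩ {ω | z ^ β ≤ Y ω} ⊆ {ω | z ≤ X ω * Y ω} := by
      rintro ω ⟨h1, h2⟩
      have := mul_le_mul h1 h2 (Real.rpow_nonneg hz.le β) ((Real.rpow_nonneg hz.le α).trans h1)
      simpa [hxy] using this
    have hind : μ ({ω | z ^ α ≤ X ω} ∩ {ω | z ^ β ≤ Y ω})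
        = μ {ω | z ^ α ≤ X ω} * μ {ω | z ^ β ≤ Y ω} := by
      have := hindep.measure_inter_preimage_eq_mul (Set.Ici (z ^ α)) (Set.Ici (z ^ β))
        measurableSet_Ici measurableSet_Ici
      exact this
    have hprod : survival μ X (z ^ α) * survival μ Y (z ^ β)
        ≤ survival μ (fun ω => X ω * Y ω) z := by
      unfold survival
      rw [← ENNReal.toReal_mul, ← hind]
      exact ENNReal.toReal_mono (measure_ne_top _ _) (measure_mono hsub)
    have hx1 : (z ^ α) ^ (1 / θx) = z ^ (1 / (θx + θy)) := by
      rw [← Real.rpow_mul hz.le]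
      congr 1
      rw [hα]; field_simp
    have hy1 : (z ^ β) ^ (1 / θy) = z ^ (1 / (θx + θy)) := by
      rw [← Real.rpow_mul hz.le]
      congr 1
      rw [hβ]; field_simp
    calc Real.exp (-(z ^ (1 / (θx + θy)) * (l1x (z ^ α) + l1y (z ^ β))))
        = Real.exp (-((z ^ α) ^ (1 / θx) * l1x (z ^ α)))
          * Real.exp (-((z ^ β) ^ (1 / θy) * l1y (z ^ β))) := by
          rw [← Real.exp_add, hx1, hy1]; ring_nf
      _ ≤ survival μ X (z ^ α) * survival μ Y (z ^ β) := by
          exact mul_le_mul hXz.1 hYz.1 (Real.exp_pos _).le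
            ((Real.exp_pos _).le.trans hXz.1)
      _ ≤ survival μ (fun ω => X ω * Y ω) z := hprod
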